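/- Let φ : ℕ → Bool be a function that is not computable. Fix n ≥ 1 and m ≥ 1, let B : Fin m → ((Fin n → Bool) → (Fin n → Bool)) be a family of bijective Boolean functions, and let h : ℕ → Fin m be a computable function. Define g : ℕ → Bool blockwise by requiring that for every j : ℕ, the n-tuple (g(j·n), g(j·n + 1), …, g(j·n + (n-1))) equals B (h j) applied to the n-tuple (φ(j·n), φ(j·n + 1), …, φ(j·n + (n-1))); that is, for all j : ℕ and i : Fin n, g(j·n + i) = B (h j) (fun i' => φ(j·n + i')) i. Then g is not computable. -/

import Mathlib

/-- Lemma 4.1 (Fiske 2012): blockwise transformation of an incomputable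
bit sequence by invertible Boolean functions, selected by a computable
index function, yields an incomputable sequence. -/
theorem dynamic_level_set_incomputable
    (φ : ℕ → Bool) (hφ : ¬ Computable φ)
    (n m : ℕ) (hn : 1 ≤ n) (hm : 1 ≤ m)
    (B : Fin m → ((Fin n → Bool) → (Fin n → Bool)))
    (hB : ∀ k : Fin m, Function.Bijective (B k))
    (h : ℕ → Fin m) (hh : Computable h)
    (g : ℕ → Bool)
    (hg : ∀ (j : ℕ) (i : Fin n),
      g (j * n + i) = B (h j) (fun i' : Fin n => φ (j * n + i')) i) :
    ¬ Computable g := by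
  intro hgc
  apply hφ
  -- inverse of each B k
  let E : Fin m → (Fin n → Bool) ≃ (Fin n → Bool) := fun k => Equiv.ofBijective _ (hB k)
  have hnpos : 0 < n := hn
  -- φ in terms of g
  have key : ∀ k : ℕ,
      φ k = (E (h (k / n))).symm (fun i : Fin n => g (k / n * n + i))
              ⟨k % n, Nat.mod_lt _ hnpos⟩ := by
    intro k
    set j := k / n with hj
    have hblock : (fun i : Fin n => g (j * n + i))
        = B (h j) (fun i' : Fin n => φ (j * n + i')) := funext fun i => hg j i
    have hsymm : (E (h j)).symm (fun i : Fin n => g (j * n + i))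
        = fun i' : Fin n => φ (j * n + i') := by
      rw [hblock]
      exact (E (h j)).symm_apply_apply _
    rw [hsymm]
    have : j * n + k % n = k := by
      rw [Nat.mul_comm]; exact Nat.div_add_mod k n
    simp [this]
  -- computability of the right-hand side
  have hdiv : Computable fun k : ℕ => k / n :=
    (Primrec.nat_div.comp Primrec.id (Primrec.const n)).to_comp
  have hidx : Computable fun k : ℕ => (⟨k % n, Nat.mod_lt _ hnpos⟩ : Fin n) := by
    rw [← Computable.encode_iff]
    exact (Primrec.nat_mod.comp Primrec.id (Primrec.const n)).to_comp
  -- the block of g at position k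
  have hvec : Computable fun k : ℕ =>
      List.Vector.ofFn (fun i : Fin n => g (k / n * n + i)) := by
    apply Computable.vector_ofFn
    intro i
    exact hgc.comp ((Primrec.nat_add.comp
      (Primrec.nat_mul.comp (Primrec.nat_div.comp Primrec.id (Primrec.const n))
        (Primrec.const n)) (Primrec.const (i : ℕ))).to_comp)
  have hblk : Computable fun k : ℕ => (fun i : Fin n => g (k / n * n + i)) := by
    have := Primrec.vector_get'.to_comp.comp hvec
    exact this.of_eq fun k => by
      funext i; simp
  -- the finite inverse function is computable
  have hF : Computable fun p : Fin m × (Fin n → Bool) => (E p.1).symm p.2 :=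
    (Primrec.dom_finite _).to_comp
  have hEg : Computable fun k : ℕ => (E (h (k / n))).symm
      (fun i : Fin n => g (k / n * n + i)) :=
    hF.comp ((hh.comp hdiv).pair hblk)
  have : Computable fun k : ℕ => (E (h (k / n))).symm
      (fun i : Fin n => g (k / n * n + i)) ⟨k % n, Nat.mod_lt _ hnpos⟩ :=
    Computable.fin_app.comp hEg hidx
  exact this.of_eq fun k => (key k).symm
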